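/- Let Λ = [[a,b],[c,d]] be a real 2×2 matrix with ad − bc = 1 and b > 0, and let f, g : ℝ → ℂ be integrable. Then the LCT convolution f ∗_Λ g is defined almost everywhere and integrable, and the convolution–multiplication property holds: for every ω ∈ ℝ, 𝓛_Λ[f ∗_Λ g](ω) = e^{−i d ω²/(2b)} · (𝓛_Λ f)(ω) · (𝓛_Λ g)(ω). -/

import Mathlib

open MeasureTheory Complex
open scoped Convolution

noncomputable section

/-- The LCT kernel `k_Λ(t, ω) = (1/√(-2πib)) exp(-(i/(2b))(a t² + d ω² - 2 ω t))`,
where `√` is the principal branch of the complex square root. -/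
def lctKernel (a b d : ℝ) (t ω : ℝ) : ℂ :=
  (((-2 : ℂ) * (Real.pi : ℂ) * Complex.I * (b : ℂ)) ^ ((1 : ℂ) / 2))⁻¹ *
    Complex.exp (-(Complex.I / (2 * (b : ℂ))) *
      ((a : ℂ) * (t : ℂ) ^ 2 + (d : ℂ) * (ω : ℂ) ^ 2 - 2 * (ω : ℂ) * (t : ℂ)))

/-- The Linear Canonical Transform `(𝓛_Λ f)(ω) = ∫ f(t) conj (k_Λ(t,ω)) dt`. -/
def lct (a b d : ℝ) (f : ℝ → ℂ) (ω : ℝ) : ℂ :=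
  ∫ t : ℝ, f t * (starRingEnd ℂ) (lctKernel a b d t ω)

/-- The LCT convolution
`(f ∗_Λ g)(t) = (e^{-i a t²/(2b)} / √(2πib)) ∫ f(z) e^{i a z²/(2b)} g(t-z) e^{i a (t-z)²/(2b)} dz`. -/
def lctConv (a b : ℝ) (f g : ℝ → ℂ) (t : ℝ) : ℂ :=
  (Complex.exp (-Complex.I * (a : ℂ) * (t : ℂ) ^ 2 / (2 * (b : ℂ))) /
      ((2 * (Real.pi : ℂ) * Complex.I * (b : ℂ)) ^ ((1 : ℂ) / 2))) *
    ∫ z : ℝ, f z * Complex.exp (Complex.I * (a : ℂ) * (z : ℂ) ^ 2 / (2 * (b : ℂ))) *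
      g (t - z) * Complex.exp (Complex.I * (a : ℂ) * ((t : ℂ) - (z : ℂ)) ^ 2 / (2 * (b : ℂ)))

/-! ### Auxiliary lemmas -/

lemma phase_norm (r : ℝ) : ‖Complex.exp ((r : ℂ) * Complex.I)‖ = 1 := by
  simpa using Complex.abs_exp_ofReal_mul_I r

lemma phase_conj (r : ℝ) :
    (starRingEnd ℂ) (Complex.exp ((r : ℂ) * Complex.I)) =
      Complex.exp (((-r : ℝ) : ℂ) * Complex.I) := by
  rw [← Complex.exp_conj, map_mul, Complex.conj_ofReal, Complex.conj_I]
  push_cast; ring_nf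

lemma phase_add (x y : ℝ) :
    Complex.exp (((x + y : ℝ) : ℂ) * Complex.I) =
      Complex.exp ((x : ℂ) * Complex.I) * Complex.exp ((y : ℂ) * Complex.I) := by
  rw [← Complex.exp_add]; push_cast; ring_nf

lemma integrable_mul_phase {f : ℝ → ℂ} (hf : Integrable f) {p : ℝ → ℝ} (hp : Continuous p) :
    Integrable (fun t => f t * Complex.exp (((p t : ℝ) : ℂ) * Complex.I)) := by
  refine Integrable.mono' hf.norm
    (hf.aestronglyMeasurable.mul
      ((Complex.continuous_exp.comp
        ((Complex.continuous_ofReal.comp hp).mul continuous_const)).aestronglyMeasurable))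
    (Filter.Eventually.of_forall fun t => ?_)
  rw [norm_mul, phase_norm, mul_one]

lemma conj_sqrt {b : ℝ} (hb : 0 < b) :
    (starRingEnd ℂ) (((-2 : ℂ) * (Real.pi : ℂ) * Complex.I * (b : ℂ)) ^ ((1 : ℂ) / 2)) =
      ((2 : ℂ) * (Real.pi : ℂ) * Complex.I * (b : ℂ)) ^ ((1 : ℂ) / 2) := by
  have harg : ((2 : ℂ) * (Real.pi : ℂ) * Complex.I * (b : ℂ)).arg ≠ Real.pi := by
    rw [Ne, Complex.arg_eq_pi_iff]
    push_neg
    intro h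
    exfalso
    have hre : ((2 : ℂ) * (Real.pi : ℂ) * Complex.I * (b : ℂ)).re = 0 := by
      simp [Complex.mul_im, Complex.mul_re]
    rw [hre] at h
    exact absurd h (lt_irrefl 0)
  have h := Complex.conj_cpow ((2 : ℂ) * (Real.pi : ℂ) * Complex.I * (b : ℂ)) ((1 : ℂ)/2) harg
  have h2 : (starRingEnd ℂ) (2 : ℂ) = 2 := by
    rw [show ((2:ℂ)) = ((2:ℝ):ℂ) by norm_num, Complex.conj_ofReal]
  have hconjx : (starRingEnd ℂ) ((2 : ℂ) * (Real.pi : ℂ) * Complex.I * (b : ℂ)) =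
      (-2 : ℂ) * (Real.pi : ℂ) * Complex.I * (b : ℂ) := by
    rw [map_mul, map_mul, map_mul, h2, Complex.conj_I, Complex.conj_ofReal, Complex.conj_ofReal]
    ring
  have hconjn : (starRingEnd ℂ) ((1 : ℂ)/2) = (1 : ℂ)/2 := by
    rw [map_div₀, map_one, show ((2:ℂ)) = ((2:ℝ):ℂ) by norm_num, Complex.conj_ofReal]
  rw [hconjx, hconjn] at h
  rw [h, Complex.conj_conj]

lemma lct_eq (a b d : ℝ) (hb : 0 < b) (f : ℝ → ℂ) (ω : ℝ) :
    lct a b d f ω = (((2 : ℂ) * (Real.pi : ℂ) * Complex.I * (b : ℂ)) ^ ((1 : ℂ) / 2))⁻¹ *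
      (Complex.exp (((d * ω ^ 2 / (2 * b) : ℝ) : ℂ) * Complex.I) *
      ∫ t : ℝ, f t * Complex.exp (((a * t ^ 2 / (2 * b) : ℝ) : ℂ) * Complex.I) *
        Complex.exp (((-(ω * t / b) : ℝ) : ℂ) * Complex.I)) := by
  unfold lct
  rw [← integral_const_mul, ← integral_const_mul]
  refine integral_congr_ae (Filter.Eventually.of_forall fun t => ?_)
  dsimp only
  unfold lctKernel
  rw [map_mul, map_inv₀, conj_sqrt hb]
  have harg : -(Complex.I / (2 * (b : ℂ))) *
      ((a : ℂ) * (t : ℂ) ^ 2 + (d : ℂ) * (ω : ℂ) ^ 2 - 2 * (ω : ℂ) * (t : ℂ)) =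
      ((-( (a * t ^ 2 + d * ω ^ 2 - 2 * ω * t) / (2 * b)) : ℝ) : ℂ) * Complex.I := by
    push_cast; ring
  rw [harg, phase_conj]
  have hsplit : (-(-( (a * t ^ 2 + d * ω ^ 2 - 2 * ω * t) / (2 * b))) : ℝ) =
      (d * ω ^ 2 / (2 * b)) + ((a * t ^ 2 / (2 * b)) + (-(ω * t / b))) := by
    field_simp
    ring
  rw [hsplit, phase_add, phase_add]
  ring

/-- **LCT convolution–multiplication property.**  For integrable `f, g`, the LCT
convolution `f ∗_Λ g` is defined almost everywhere and integrable, and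
`𝓛_Λ[f ∗_Λ g](ω) = e^{-i d ω²/(2b)} (𝓛_Λ f)(ω) (𝓛_Λ g)(ω)` for every `ω`. -/
theorem lct_convolution_multiplication (a b c d : ℝ) (hdet : a * d - b * c = 1) (hb : 0 < b)
    (f g : ℝ → ℂ) (hf : Integrable f) (hg : Integrable g) :
    (∀ᵐ t : ℝ, Integrable (fun z : ℝ =>
        f z * Complex.exp (Complex.I * (a : ℂ) * (z : ℂ) ^ 2 / (2 * (b : ℂ))) *
        g (t - z) * Complex.exp (Complex.I * (a : ℂ) * ((t : ℂ) - (z : ℂ)) ^ 2 / (2 * (b : ℂ))))) ∧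
    Integrable (lctConv a b f g) ∧
    ∀ ω : ℝ, lct a b d (lctConv a b f g) ω =
      Complex.exp (-Complex.I * (d : ℂ) * (ω : ℂ) ^ 2 / (2 * (b : ℂ))) *
        lct a b d f ω * lct a b d g ω := by
  classical
  set F : ℝ → ℂ := fun z => f z * Complex.exp (((a * z ^ 2 / (2 * b) : ℝ) : ℂ) * Complex.I)
    with hFdef
  set G : ℝ → ℂ := fun z => g z * Complex.exp (((a * z ^ 2 / (2 * b) : ℝ) : ℂ) * Complex.I)
    with hGdef
  have hF : Integrable F := integrable_mul_phase hf
    ((continuous_const.mul (continuous_pow 2)).div_const _)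
  have hG : Integrable G := integrable_mul_phase hg
    ((continuous_const.mul (continuous_pow 2)).div_const _)
  have hcast : ∀ t z : ℝ,
      f z * Complex.exp (Complex.I * (a : ℂ) * (z : ℂ) ^ 2 / (2 * (b : ℂ))) *
        g (t - z) * Complex.exp (Complex.I * (a : ℂ) * ((t : ℂ) - (z : ℂ)) ^ 2 / (2 * (b : ℂ))) =
        F z * G (t - z) := by
    intro t z
    have h1 : Complex.I * (a : ℂ) * (z : ℂ) ^ 2 / (2 * (b : ℂ)) =
        ((a * z ^ 2 / (2 * b) : ℝ) : ℂ) * Complex.I := by push_cast; ring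
    have h2 : Complex.I * (a : ℂ) * ((t : ℂ) - (z : ℂ)) ^ 2 / (2 * (b : ℂ)) =
        ((a * (t - z) ^ 2 / (2 * b) : ℝ) : ℂ) * Complex.I := by push_cast; ring
    rw [h1, h2, hFdef, hGdef]
    ring
  have hae := MeasureTheory.Integrable.ae_convolution_exists
    (L := ContinuousLinearMap.mul ℂ ℂ) (μ := volume) (ν := volume) hF hG
  have hconv_def : ∀ t : ℝ, (F ⋆[ContinuousLinearMap.mul ℂ ℂ] G) t = ∫ z, F z * G (t - z) := by
    intro t
    simp [MeasureTheory.convolution_def]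
  have part1 : ∀ᵐ t : ℝ, Integrable (fun z : ℝ =>
      f z * Complex.exp (Complex.I * (a : ℂ) * (z : ℂ) ^ 2 / (2 * (b : ℂ))) *
      g (t - z) * Complex.exp (Complex.I * (a : ℂ) * ((t : ℂ) - (z : ℂ)) ^ 2 / (2 * (b : ℂ)))) := by
    filter_upwards [hae] with t ht
    have ht' : Integrable (fun z => F z * G (t - z)) := by
      simpa [MeasureTheory.ConvolutionExistsAt] using ht
    exact ht'.congr (Filter.Eventually.of_forall fun z => (hcast t z).symm)
  have hConvInt : Integrable (F ⋆[ContinuousLinearMap.mul ℂ ℂ] G) :=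
    MeasureTheory.Integrable.integrable_convolution (L := ContinuousLinearMap.mul ℂ ℂ) hF hG
  have hlctConv_eq : lctConv a b f g = fun t =>
      (Complex.exp (((-(a * t ^ 2 / (2 * b)) : ℝ) : ℂ) * Complex.I) /
        ((2 * (Real.pi : ℂ) * Complex.I * (b : ℂ)) ^ ((1 : ℂ) / 2))) *
        (F ⋆[ContinuousLinearMap.mul ℂ ℂ] G) t := by
    funext t
    unfold lctConv
    rw [hconv_def t]
    have hpre : -Complex.I * (a : ℂ) * (t : ℂ) ^ 2 / (2 * (b : ℂ)) =
        ((-(a * t ^ 2 / (2 * b)) : ℝ) : ℂ) * Complex.I := by push_cast; ring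
    rw [hpre]
    congr 1
    exact integral_congr_ae (Filter.Eventually.of_forall fun z => hcast t z)
  have part2 : Integrable (lctConv a b f g) := by
    rw [hlctConv_eq]
    refine Integrable.bdd_mul (c := ‖(((2 : ℂ) * (Real.pi : ℂ) * Complex.I * (b : ℂ)) ^ ((1 : ℂ) / 2))⁻¹‖) hConvInt ?_ ?_
    · exact ((Complex.continuous_exp.comp
        (((Complex.continuous_ofReal.comp
          (((continuous_const.mul (continuous_pow 2)).div_const _).neg)).mul
            continuous_const))).div_const _).aestronglyMeasurable
    · refine Filter.Eventually.of_forall fun t => ?_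
      rw [norm_div, phase_norm, norm_inv]
      rw [one_div]
  refine ⟨part1, part2, fun ω => ?_⟩
  rw [lct_eq a b d hb, lct_eq a b d hb, lct_eq a b d hb]
  set S : ℂ := ((2 : ℂ) * (Real.pi : ℂ) * Complex.I * (b : ℂ)) ^ ((1 : ℂ) / 2) with hSdef
  set F' : ℝ → ℂ := fun z => F z * Complex.exp (((-(ω * z / b) : ℝ) : ℂ) * Complex.I) with hF'def
  set G' : ℝ → ℂ := fun z => G z * Complex.exp (((-(ω * z / b) : ℝ) : ℂ) * Complex.I) with hG'def
  have hF' : Integrable F' := integrable_mul_phase hF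
    ((continuous_const.mul continuous_id).div_const _).neg
  have hG' : Integrable G' := integrable_mul_phase hG
    ((continuous_const.mul continuous_id).div_const _).neg
  have key : (∫ t : ℝ, lctConv a b f g t *
        Complex.exp (((a * t ^ 2 / (2 * b) : ℝ) : ℂ) * Complex.I) *
        Complex.exp (((-(ω * t / b) : ℝ) : ℂ) * Complex.I)) =
      S⁻¹ * ((∫ t : ℝ, F' t) * (∫ t : ℝ, G' t)) := by
    have step1 : ∀ t : ℝ, lctConv a b f g t *
        Complex.exp (((a * t ^ 2 / (2 * b) : ℝ) : ℂ) * Complex.I) *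
        Complex.exp (((-(ω * t / b) : ℝ) : ℂ) * Complex.I) =
        S⁻¹ * ((F' ⋆[ContinuousLinearMap.mul ℂ ℂ] G') t) := by
      intro t
      rw [hlctConv_eq]
      dsimp only
      have hcancel : Complex.exp (((-(a * t ^ 2 / (2 * b)) : ℝ) : ℂ) * Complex.I) *
          Complex.exp (((a * t ^ 2 / (2 * b) : ℝ) : ℂ) * Complex.I) = 1 := by
        rw [← phase_add]
        norm_num
      have hconv' : (F' ⋆[ContinuousLinearMap.mul ℂ ℂ] G') t = ∫ z, F' z * G' (t - z) := by
        simp [MeasureTheory.convolution_def]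
      rw [hconv', hconv_def t]
      have hpt : ∀ z : ℝ, F' z * G' (t - z) =
          F z * G (t - z) * Complex.exp (((-(ω * t / b) : ℝ) : ℂ) * Complex.I) := by
        intro z
        rw [hF'def, hG'def]
        dsimp only
        have : (-(ω * t / b) : ℝ) = (-(ω * z / b)) + (-(ω * (t - z) / b)) := by ring
        rw [this, phase_add]
        ring
      rw [show (∫ z, F' z * G' (t - z)) =
          ∫ z, F z * G (t - z) * Complex.exp (((-(ω * t / b) : ℝ) : ℂ) * Complex.I) from
        integral_congr_ae (Filter.Eventually.of_forall fun z => hpt z)]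
      rw [integral_mul_const]
      linear_combination (S⁻¹ * (∫ (z : ℝ), F z * G (t - z)) *
        Complex.exp (((-(ω * t / b) : ℝ) : ℂ) * Complex.I)) * hcancel
    rw [integral_congr_ae (Filter.Eventually.of_forall step1)]
    rw [integral_const_mul]
    congr 1
    have := MeasureTheory.integral_convolution (L := ContinuousLinearMap.mul ℂ ℂ)
      (μ := volume) (ν := volume) hF' hG'
    simpa using this
  rw [key]
  have hErw : Complex.exp (-Complex.I * (d : ℂ) * (ω : ℂ) ^ 2 / (2 * (b : ℂ))) =
      (Complex.exp (((d * ω ^ 2 / (2 * b) : ℝ) : ℂ) * Complex.I))⁻¹ := by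
    rw [← Complex.exp_neg]
    congr 1
    push_cast; ring
  rw [hErw]
  have hP : Complex.exp (((d * ω ^ 2 / (2 * b) : ℝ) : ℂ) * Complex.I) ≠ 0 :=
    Complex.exp_ne_zero _
  field_simp
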